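/- Let T1, T2 be q-commuting contractions with product T = T1T2. If T is an isometry, then both T1 and T2 are isometries. -/
import Mathlib

open ContinuousLinearMap

/-- If `T1, T2` are `q`-commuting contractions whose product `T = T1 T2` is an isometry,
then both `T1` and `T2` are isometries. -/
theorem isometry_of_product_isometry
    {H : Type*} [NormedAddCommGroup H] [InnerProductSpace ℂ H] [CompleteSpace H]
    (q : ℂ) (hq : ‖q‖ = 1)
    (T1 T2 : H →L[ℂ] H) (hT1 : ‖T1‖ ≤ 1) (hT2 : ‖T2‖ ≤ 1)
    (hcomm : T1 * T2 = q • (T2 * T1))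
    (hiso : adjoint (T1 * T2) * (T1 * T2) = 1) :
    adjoint T1 * T1 = 1 ∧ adjoint T2 * T2 = 1 := by
  have hT : ∀ x : H, ‖(T1 * T2) x‖ = ‖x‖ :=
    (norm_map_iff_adjoint_comp_self (T1 * T2)).mpr hiso
  have hT' : ∀ x : H, ‖(T2 * T1) x‖ = ‖x‖ := by
    intro x
    have : ‖(T1 * T2) x‖ = ‖q‖ * ‖(T2 * T1) x‖ := by
      rw [hcomm]; simp [norm_smul]
    rw [hT x, hq, one_mul] at this
    exact this.symm
  have key : ∀ (A B : H →L[ℂ] H), ‖A‖ ≤ 1 → ‖B‖ ≤ 1 → (∀ x, ‖(A * B) x‖ = ‖x‖) →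
      ∀ x : H, ‖B x‖ = ‖x‖ := by
    intro A B hA hB h x
    refine le_antisymm ?_ ?_
    · calc ‖B x‖ ≤ ‖B‖ * ‖x‖ := B.le_opNorm x
        _ ≤ 1 * ‖x‖ := mul_le_mul_of_nonneg_right hB (norm_nonneg x)
        _ = ‖x‖ := one_mul _
    · calc ‖x‖ = ‖A (B x)‖ := (h x).symm
        _ ≤ ‖A‖ * ‖B x‖ := A.le_opNorm _
        _ ≤ 1 * ‖B x‖ := mul_le_mul_of_nonneg_right hA (norm_nonneg _)
        _ = ‖B x‖ := one_mul _
  constructor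
  · exact (norm_map_iff_adjoint_comp_self T1).mp (key T2 T1 hT2 hT1 hT')
  · exact (norm_map_iff_adjoint_comp_self T2).mp (key T1 T2 hT1 hT2 hT)
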